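/- Let G be a group and H a subgroup of G of finite index. Let p be an ultrafilter on G that is idempotent with respect to the extension of the group operation to ultrafilters, i.e., p·p = p, where for ultrafilters p, q on G the product is defined by: A ∈ p·q if and only if {s ∈ G : s^{-1}·A ∈ q} ∈ p (here s^{-1}·A = {x ∈ G : s·x ∈ A}). Then H ∈ p, i.e., the underlying set of H belongs to p. -/

import Mathlib

/-- Let `G` be a group, `H` a finite-index subgroup, and `p` an ultrafilter on `G` that is
idempotent for the product `A ∈ p·q ↔ {s | s⁻¹·A ∈ q} ∈ p` (the idempotency `p·p = p` is
stated elementwise). Then the underlying set of `H` belongs to `p`. -/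
theorem stmt_19 {G : Type*} [Group G] (H : Subgroup G) (hH : H.FiniteIndex)
    (p : Ultrafilter G)
    (hp : ∀ A : Set G, A ∈ p ↔ {s : G | {x : G | s * x ∈ A} ∈ p} ∈ p) :
    (H : Set G) ∈ p := by
  haveI : H.FiniteIndex := hH
  haveI : Finite (G ⧸ H) := Subgroup.finite_quotient_of_finiteIndex
  -- some coset belongs to p
  have hcoset : ∃ c : G ⧸ H, {x : G | (x : G ⧸ H) = c} ∈ p := by
    by_contra h
    push_neg at h
    have hc : ∀ c : G ⧸ H, {x : G | (x : G ⧸ H) = c}ᶜ ∈ p := fun c =>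
      Ultrafilter.compl_mem_iff_notMem.mpr (h c)
    have hint : (⋂ c : G ⧸ H, {x : G | (x : G ⧸ H) = c}ᶜ) ∈ p :=
      (Filter.iInter_mem).mpr hc
    have hempty : (⋂ c : G ⧸ H, {x : G | (x : G ⧸ H) = c}ᶜ) = (∅ : Set G) := by
      ext x
      simp only [Set.mem_iInter, Set.mem_compl_iff, Set.mem_setOf_eq, Set.mem_empty_iff_false,
        iff_false, not_forall, not_not]
      exact ⟨(x : G ⧸ H), rfl⟩
    rw [hempty] at hint
    simpa using hint
  obtain ⟨c, hc⟩ := hcoset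
  obtain ⟨g, rfl⟩ := Quotient.exists_rep c
  set A : Set G := {x : G | (x : G ⧸ H) = ⟦g⟧} with hA
  have hS : {s : G | {x : G | s * x ∈ A} ∈ p} ∈ p := (hp A).mp hc
  have hboth : ({s : G | {x : G | s * x ∈ A} ∈ p} ∩ A).Nonempty :=
    Ultrafilter.nonempty_of_mem (Filter.inter_mem hS hc)
  obtain ⟨s, hsS, hsA⟩ := hboth
  have hsg : s⁻¹ * g ∈ H := by
    have : (s : G ⧸ H) = ((g : G) : G ⧸ H) := hsA
    exact (QuotientGroup.eq).mp this
  have hEq : {x : G | s * x ∈ A} = (H : Set G) := by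
    ext x
    simp only [hA, Set.mem_setOf_eq, SetLike.mem_coe]
    constructor
    · intro hx
      have hx' : (s * x)⁻¹ * g ∈ H := (QuotientGroup.eq).mp hx
      have : x⁻¹ * (s⁻¹ * g) ∈ H := by rwa [mul_inv_rev, mul_assoc] at hx'
      have hxinv : x⁻¹ ∈ H := by
        have := H.mul_mem this (H.inv_mem hsg)
        simpa [mul_assoc] using this
      simpa using H.inv_mem hxinv
    · intro hx
      refine (QuotientGroup.eq).mpr ?_
      have : x⁻¹ * (s⁻¹ * g) ∈ H := H.mul_mem (H.inv_mem hx) hsg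
      rwa [mul_inv_rev, mul_assoc]
  exact hEq ▸ hsS
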